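/- Let G be a finite group and p a prime. Then G has a strongly p-embedded subgroup if and only if the graph Γ_p(G) is disconnected. -/

import Mathlib

open MulAction Subgroup SimpleGraph

/-- The graph `Γ_p(G)` whose vertices are the Sylow `p`-subgroups of `G`, two distinct
Sylow `p`-subgroups being adjacent exactly when their intersection is nontrivial. -/
def sylowGraph (p : ℕ) (G : Type*) [Group G] : SimpleGraph (Sylow p G) where
  Adj P Q := P ≠ Q ∧ (P : Subgroup G) ⊓ (Q : Subgroup G) ≠ ⊥
  symm := ⟨fun P Q h => ⟨h.1.symm, by rw [inf_comm]; exact h.2⟩⟩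
  loopless := ⟨fun P h => h.1 rfl⟩

section Aux

variable {p : ℕ} {G : Type*} [Group G]

lemma sylow_coe_smul (g : G) (P : Sylow p G) :
    ((g • P : Sylow p G) : Subgroup G) = Subgroup.map (MulAut.conj g).toMonoidHom ↑P := rfl

lemma sylowGraph_adj_smul (g : G) {P Q : Sylow p G} (h : (sylowGraph p G).Adj P Q) :
    (sylowGraph p G).Adj (g • P) (g • Q) := by
  refine ⟨fun he => h.1 (smul_left_cancel g he), fun hbot => h.2 ?_⟩
  have hinj : Function.Injective (MulAut.conj g).toMonoidHom := (MulAut.conj g).injective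
  rw [sylow_coe_smul, sylow_coe_smul, ← Subgroup.map_inf _ _ _ hinj] at hbot
  exact (Subgroup.map_eq_bot_iff_of_injective (↑P ⊓ ↑Q) hinj).mp hbot

/-- Conjugation as a graph homomorphism of the Sylow graph. -/
def sylowGraphHom (g : G) : sylowGraph p G →g sylowGraph p G :=
  ⟨fun P => g • P, fun h => sylowGraph_adj_smul g h⟩

lemma sylowGraph_reachable_smul (g : G) {P Q : Sylow p G}
    (h : (sylowGraph p G).Reachable P Q) :
    (sylowGraph p G).Reachable (g • P) (g • Q) :=
  h.map (sylowGraphHom g)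

lemma pdvd_card_of_isPGroup {p : ℕ} (hp : p.Prime) {G : Type*} [Group G] [Finite G]
    {H : Subgroup G} (h1 : IsPGroup p H) (h2 : H ≠ ⊥) : p ∣ Nat.card H := by
  haveI := Fact.mk hp
  obtain ⟨n, hn⟩ := IsPGroup.iff_card.mp h1
  rcases Nat.eq_zero_or_pos n with h0 | h0
  · exact absurd (Subgroup.card_eq_one.mp (by simp [hn, h0])) h2
  · exact hn ▸ dvd_pow_self p h0.ne'

/-- An action of a subgroup on an invariant set of a `G`-set. -/
def invariantAction {G : Type*} [Group G] {α : Type*} [MulAction G α] (H : Subgroup G)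
    (s : Set α) (hs : ∀ (h : H) (a : α), a ∈ s → (h : G) • a ∈ s) : MulAction H s where
  smul h a := ⟨(h : G) • a.1, hs h a.1 a.2⟩
  one_smul a := Subtype.ext (show ((1 : H) : G) • a.1 = a.1 by simp)
  mul_smul h h' a := Subtype.ext
    (show ((h * h' : H) : G) • a.1 = (h : G) • (h' : G) • a.1 by
      rw [Subgroup.coe_mul, mul_smul])

end Aux

section Fwd

variable {p : ℕ} {G : Type*} [Group G] [Finite G]

/-- Any Sylow subgroup meeting a strongly `p`-embedded subgroup nontrivially lies in it. -/
lemma sylow_le_of_strongly_embedded (hp : p.Prime) {X : Subgroup G}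
    (hX : ∀ g : G, p ∣ Nat.card ↥(X ⊓ Subgroup.map (MulAut.conj g).toMonoidHom X) → g ∈ X)
    (T : Sylow p G) (hT : (T : Subgroup G) ⊓ X ≠ ⊥) : (T : Subgroup G) ≤ X := by
  haveI := Fact.mk hp
  set K : Subgroup ↥(T : Subgroup G) := X.comap (T : Subgroup G).subtype with hKdef
  suffices h : K = ⊤ by
    intro t ht
    have : (⟨t, ht⟩ : ↥(T : Subgroup G)) ∈ K := h ▸ Subgroup.mem_top _
    exact this
  by_contra hne
  have hnc : NormalizerCondition ↥(T : Subgroup G) :=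
    normalizerCondition_of_isNilpotent (h := T.isPGroup'.isNilpotent)
  obtain ⟨s, hs1, hs2⟩ := SetLike.exists_of_lt (hnc K (lt_top_iff_ne_top.mpr hne))
  refine hs2 ?_
  show (s : G) ∈ X
  apply hX
  have hle : (T : Subgroup G) ⊓ X ≤ X ⊓ Subgroup.map (MulAut.conj (s : G)).toMonoidHom X := by
    refine le_inf inf_le_right ?_
    rintro x ⟨hxT, hxX⟩
    refine ⟨(s : G)⁻¹ * x * (s : G), ?_, by simp [MulAut.conj]; group⟩
    have hx' : (⟨x, hxT⟩ : ↥(T : Subgroup G)) ∈ K := hxX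
    have hsinv : s⁻¹ ∈ Subgroup.normalizer (K : Set ↥(T : Subgroup G)) := Subgroup.inv_mem _ hs1
    have := (Subgroup.mem_normalizer_iff.mp hsinv ⟨x, hxT⟩).mp hx'
    simpa [mul_assoc, hKdef, Subgroup.mem_subgroupOf] using this
  have hdvd : p ∣ Nat.card ↥((T : Subgroup G) ⊓ X) :=
    pdvd_card_of_isPGroup hp (T.isPGroup'.to_inf_left) hT
  exact hdvd.trans (Subgroup.card_dvd_of_le hle)

lemma forward_direction (hp : p.Prime) {X : Subgroup G} (hXtop : X ≠ ⊤)
    (hXp : p ∣ Nat.card X)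
    (hX : ∀ g : G, p ∣ Nat.card ↥(X ⊓ Subgroup.map (MulAut.conj g).toMonoidHom X) → g ∈ X) :
    ¬ (sylowGraph p G).Connected := by
  haveI := Fact.mk hp
  obtain ⟨x, hx⟩ := exists_prime_orderOf_dvd_card' (G := ↥X) p hXp
  set y : G := (x : G) with hy
  have hyord : orderOf y = p := by rw [hy, orderOf_submonoid, hx]
  have hy1 : y ≠ 1 := by
    intro h
    rw [h, orderOf_one] at hyord
    exact hp.one_lt.ne hyord
  set R : Subgroup G := Subgroup.zpowers y with hR
  have hRX : R ≤ X := Subgroup.zpowers_le.mpr x.2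
  have hRp : IsPGroup p ↥R := IsPGroup.of_card (by rw [hR, Nat.card_zpowers, hyord, pow_one])
  have hRbot : R ≠ ⊥ := fun h => hy1 (Subgroup.zpowers_eq_bot.mp h)
  obtain ⟨S₀, hS₀⟩ := hRp.exists_le_sylow
  have hS₀X : (S₀ : Subgroup G) ≤ X :=
    sylow_le_of_strongly_embedded hp hX S₀
      (fun h => hRbot (le_bot_iff.mp ((le_inf hS₀ hRX).trans h.le)))
  obtain ⟨g, hg⟩ : ∃ g : G, g ∉ X := by
    by_contra h
    push_neg at h
    exact hXtop (Subgroup.eq_top_iff' X |>.mpr h)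
  have key : ∀ {T T' : Sylow p G} (_ : (sylowGraph p G).Walk T T'),
      (T : Subgroup G) ≤ X → (T' : Subgroup G) ≤ X := by
    intro T T' w
    induction w with
    | nil => exact id
    | @cons u v w h w' ih =>
      intro hu
      refine ih (sylow_le_of_strongly_embedded hp hX v ?_)
      intro hb
      refine h.2 (le_bot_iff.mp ?_)
      rw [← hb]
      exact le_inf inf_le_right (le_trans inf_le_left hu)
  intro hcon
  refine hg (hX g ?_)
  obtain ⟨w⟩ := hcon.preconnected S₀ (g • S₀)
  have h1 : ((g • S₀ : Sylow p G) : Subgroup G) ≤ X := key w hS₀X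
  have h2 : ((g • S₀ : Sylow p G) : Subgroup G) ≤
      X ⊓ Subgroup.map (MulAut.conj g).toMonoidHom X :=
    le_inf h1 (by rw [sylow_coe_smul]; exact Subgroup.map_mono hS₀X)
  have hS₀bot : ((g • S₀ : Sylow p G) : Subgroup G) ≠ ⊥ := by
    rw [sylow_coe_smul]
    intro h
    have := (Subgroup.map_eq_bot_iff_of_injective (G := G) (↑S₀) (MulAut.conj g).injective).mp h
    exact hRbot (le_bot_iff.mp (this ▸ hS₀))
  exact (pdvd_card_of_isPGroup hp (g • S₀).isPGroup' hS₀bot).trans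
    (Subgroup.card_dvd_of_le h2)

end Fwd

section Rev

variable {p : ℕ} {G : Type*} [Group G] [Finite G]

lemma reverse_direction (hp : p.Prime) (hdis : ¬ (sylowGraph p G).Connected) :
    ∃ X : Subgroup G, X ≠ ⊤ ∧ p ∣ Nat.card X ∧
      ∀ g : G, p ∣ Nat.card ↥(X ⊓ Subgroup.map (MulAut.conj g).toMonoidHom X) → g ∈ X := by
  haveI := Fact.mk hp
  obtain ⟨S, Q₀, hPQ⟩ : ∃ P Q : Sylow p G, ¬ (sylowGraph p G).Reachable P Q := by
    by_contra h
    push_neg at h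
    exact hdis ⟨h⟩
  have hSbot : (S : Subgroup G) ≠ ⊥ := by
    intro h
    have hnorm : (S : Subgroup G).Normal := by rw [h]; infer_instance
    haveI := Sylow.unique_of_normal S hnorm
    exact hPQ (by rw [Unique.eq_default S, Unique.eq_default Q₀])
  -- the stabilizer of the connected component of S
  set X : Subgroup G :=
    { carrier := {g : G | (sylowGraph p G).Reachable S (g • S)}
      one_mem' := by
        simp only [Set.mem_setOf_eq, one_smul]
        exact SimpleGraph.Reachable.refl S
      mul_mem' := by
        intro a b ha hb
        simp only [Set.mem_setOf_eq] at *
        rw [mul_smul]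
        exact ha.trans (sylowGraph_reachable_smul a hb)
      inv_mem' := by
        intro a ha
        simp only [Set.mem_setOf_eq] at *
        have h2 := sylowGraph_reachable_smul a⁻¹ ha
        rw [inv_smul_smul] at h2
        exact h2.symm } with hXdef
  have hmemX : ∀ g : G, g ∈ X ↔ (sylowGraph p G).Reachable S (g • S) := fun g => Iff.rfl
  -- S is contained in X
  have hSX : (S : Subgroup G) ≤ X := by
    intro s hs
    rw [hmemX, Sylow.smul_eq_iff_mem_normalizer.mpr (Subgroup.le_normalizer hs)]
  -- X maps the component of S to itself
  have hCinv : ∀ g ∈ X, ∀ Q : Sylow p G, (sylowGraph p G).Reachable S Q →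
      (sylowGraph p G).Reachable S (g • Q) := fun g hg Q h =>
    ((hmemX g).mp hg).trans (sylowGraph_reachable_smul g h)
  refine ⟨X, ?_, ?_, ?_⟩
  · -- X ≠ ⊤
    obtain ⟨g, hgS⟩ := MulAction.exists_smul_eq G S Q₀
    intro h
    exact hPQ (by rw [← hgS]; exact (hmemX g).mp (h ▸ Subgroup.mem_top g))
  · -- p ∣ card X
    exact (pdvd_card_of_isPGroup hp S.isPGroup' hSbot).trans (Subgroup.card_dvd_of_le hSX)
  -- strong embedding
  -- the component of S, and its complement
  set C : Set (Sylow p G) := {Q | (sylowGraph p G).Reachable S Q} with hCdef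
  set D : Set (Sylow p G) := {Q | ¬ (sylowGraph p G).Reachable S Q} with hDdef
  -- the action of S on D
  letI actD : MulAction ↥(S : Subgroup G) ↥D :=
    invariantAction (S : Subgroup G) D (by
      intro s Q hQ hreach
      have h2 := hCinv (s : G)⁻¹ (Subgroup.inv_mem _ (hSX s.2)) _ hreach
      rw [inv_smul_smul] at h2
      exact hQ h2)
  have hfixD : IsEmpty ↥(MulAction.fixedPoints ↥(S : Subgroup G) ↥D) := by
    constructor
    rintro ⟨⟨Q, hQ⟩, hfix⟩
    rw [MulAction.mem_fixedPoints] at hfix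
    have hnorm : (S : Subgroup G) ≤ Subgroup.normalizer (Q : Set G) := by
      intro s hs
      exact Sylow.smul_eq_iff_mem_normalizer.mp
        (congrArg Subtype.val (hfix ⟨s, hs⟩))
    have hSQ : (S : Subgroup G) ≤ (Q : Subgroup G) := by
      have := S.isPGroup'.inf_normalizer_sylow Q
      rw [inf_eq_left.mpr hnorm] at this
      rw [this]
      exact inf_le_right
    have hQS : Q = S := Sylow.ext (S.3 Q.isPGroup' hSQ)
    rw [hQS] at hQ
    exact hQ (SimpleGraph.Reachable.refl S)
  have hDdvd : p ∣ Nat.card ↥D := by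
    have h1 := S.isPGroup'.card_modEq_card_fixedPoints ↥D
    rw [Nat.card_of_isEmpty (α := ↥(MulAction.fixedPoints ↥(S : Subgroup G) ↥D))] at h1
    exact (Nat.modEq_zero_iff_dvd).mp h1
  have hsplit : Nat.card (Sylow p G) = Nat.card ↥C + Nat.card ↥D := by
    classical
    rw [← Nat.card_sum]
    exact (Nat.card_congr (Equiv.sumCompl (fun Q => (sylowGraph p G).Reachable S Q))).symm
  have hCnd : ¬ p ∣ Nat.card ↥C := by
    intro h
    have htot : p ∣ Nat.card (Sylow p G) := by
      rw [hsplit]; exact dvd_add h hDdvd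
    have h1 : (1 : ℕ) ≡ 0 [MOD p] :=
      (card_sylow_modEq_one p G).symm.trans (Nat.modEq_zero_iff_dvd.mpr htot)
    exact hp.ne_one (Nat.dvd_one.mp (Nat.modEq_zero_iff_dvd.mp h1))
  -- key: any Sylow containing an order-p element of X is in the component of S
  have keyC : ∀ y : G, y ∈ X → orderOf y = p → ∀ U : Sylow p G, y ∈ U →
      (sylowGraph p G).Reachable S U := by
    intro y hyX hyord U hyU
    have hy1 : y ≠ 1 := fun h => hp.one_lt.ne (by rw [h, orderOf_one] at hyord; exact hyord)
    set R : Subgroup G := Subgroup.zpowers y with hRdef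
    have hRX : R ≤ X := Subgroup.zpowers_le.mpr hyX
    have hRp : IsPGroup p ↥R := IsPGroup.of_card (by rw [hRdef, Nat.card_zpowers, hyord, pow_one])
    letI actC : MulAction ↥R ↥C :=
      invariantAction R C (fun r Q hQ => hCinv (r : G) (hRX r.2) Q hQ)
    obtain ⟨⟨U', hU'⟩, hfix⟩ := hRp.nonempty_fixed_point_of_prime_not_dvd_card ↥C hCnd
    rw [MulAction.mem_fixedPoints] at hfix
    have hnorm : R ≤ Subgroup.normalizer (U' : Set G) := by
      intro r hr
      exact Sylow.smul_eq_iff_mem_normalizer.mp (congrArg Subtype.val (hfix ⟨r, hr⟩))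
    have hRU' : R ≤ (U' : Subgroup G) := by
      have := hRp.inf_normalizer_sylow U'
      rw [inf_eq_left.mpr hnorm] at this
      rw [this]; exact inf_le_right
    by_cases hUU : U = U'
    · exact hUU ▸ hU'
    · refine hU'.trans (SimpleGraph.Adj.reachable ?_)
      refine ⟨Ne.symm hUU, ?_⟩
      intro hB
      have hyB : y ∈ ((U' : Subgroup G) ⊓ U) :=
        ⟨hRU' (Subgroup.mem_zpowers y), hyU⟩
      rw [hB] at hyB
      exact hy1 (Subgroup.mem_bot.mp hyB)
  intro g hdvd
  obtain ⟨z, hz⟩ := exists_prime_orderOf_dvd_card'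
    (G := ↥(X ⊓ Subgroup.map (MulAut.conj g).toMonoidHom X)) p hdvd
  set y : G := (z : G) with hydef
  have hyord : orderOf y = p := by rw [hydef, orderOf_submonoid, hz]
  have hyX : y ∈ X := z.2.1
  have hyXg : y ∈ Subgroup.map (MulAut.conj g).toMonoidHom X := z.2.2
  obtain ⟨U, hU⟩ := (IsPGroup.of_card (n := 1)
    (by rw [Nat.card_zpowers, hyord, pow_one]) : IsPGroup p ↥(Subgroup.zpowers y)).exists_le_sylow
  have hreachU : (sylowGraph p G).Reachable S U :=
    keyC y hyX hyord U (hU (Subgroup.mem_zpowers y))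
  -- the conjugate element
  obtain ⟨w, hwX, hwy⟩ := hyXg
  -- w = g⁻¹ y g ∈ X
  have hwval : w = g⁻¹ * y * g := by
    have : (MulAut.conj g) w = y := hwy
    rw [MulAut.conj_apply] at this
    rw [← this]; group
  have hword : orderOf w = p := by
    have hw2 : w = (MulAut.conj g⁻¹).toMonoidHom y := by
      simp only [MulEquiv.coe_toMonoidHom, MulAut.conj_apply, hwval]
      group
    rw [hw2, orderOf_injective (MulAut.conj g⁻¹).toMonoidHom (MulAut.conj g⁻¹).injective, hyord]
  have hwU : w ∈ ((g⁻¹ • U : Sylow p G) : Subgroup G) := by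
    rw [sylow_coe_smul]
    refine ⟨y, hU (Subgroup.mem_zpowers y), ?_⟩
    simp only [MulEquiv.coe_toMonoidHom, MulAut.conj_apply, hwval]
    group
  have hreachU' : (sylowGraph p G).Reachable S (g⁻¹ • U) := keyC w hwX hword _ hwU
  have h3 := sylowGraph_reachable_smul g hreachU'
  rw [smul_inv_smul] at h3
  rw [hmemX]
  exact hreachU.trans h3.symm

end Rev

/-- A finite group `G` has a strongly `p`-embedded subgroup (a proper
subgroup `X` of order divisible by `p` such that every `g ∈ G` with `p ∣ |X ∩ gXg⁻¹|`
lies in `X`) if and only if the graph `Γ_p(G)` is disconnected. -/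
theorem stmt_6 {p : ℕ} (hp : p.Prime) (G : Type*) [Group G] [Finite G] :
    (∃ X : Subgroup G, X ≠ ⊤ ∧ p ∣ Nat.card X ∧
        ∀ g : G, p ∣ Nat.card ↥(X ⊓ Subgroup.map (MulAut.conj g).toMonoidHom X) → g ∈ X) ↔
      ¬ (sylowGraph p G).Connected := by
  constructor
  · rintro ⟨X, h1, h2, h3⟩
    exact forward_direction hp h1 h2 h3
  · exact reverse_direction hp
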